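/- arXiv:2009.13821 — 7 statements merged into one kernel-verified Lean document; each statement's English description precedes it below -/
import Mathlib

section
/- Let G = (V, E_conf) be a finite graph with nonnegative vertex weights w_v and nonnegative edge weights w_e. For a subset S ⊆ V define cost(S) = Σ_{v ∉ S} w_v + Σ_{e ⊆ S} w_e (sum over edges both of whose endpoints lie in S). Then any minimal (with respect to set inclusion of chosen cover sets) solution of the associated set cover instance — elements are edges, and each edge e = {u,v} can be covered by the set 'delete u' (weight w_u), 'delete v' (weight w_v), or 'pay for e' (weight w_e) — induces a subset S with cost(S) equal to the weight of the cover, and hence min_S cost(S) equals the minimum weighted set cover. -/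
attribute [local instance] Classical.propDecidable

open Finset

variable {V : Type*} [DecidableEq V]

/-- The cost of keeping the subset `S` of vertices: the weight of deleted vertices
plus the weight of the edges both of whose endpoints survive. -/
noncomputable def graphCost (Vs : Finset V) (Econf : Finset (V × V))
    (wv : V → ℚ) (we : V × V → ℚ) (S : Finset V) : ℚ :=
  (∑ v ∈ Vs \ S, wv v) + ∑ e ∈ Econf.filter (fun e => e.1 ∈ S ∧ e.2 ∈ S), we e

/-- A set cover of the instance: each edge is covered by deleting one of its
endpoints (a vertex in `K`) or by paying for it (membership in `P`). -/
def IsCover (Econf : Finset (V × V)) (K : Finset V) (P : Finset (V × V)) : Prop :=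
  ∀ e ∈ Econf, e.1 ∈ K ∨ e.2 ∈ K ∨ e ∈ P

noncomputable def coverWeight (wv : V → ℚ) (we : V × V → ℚ)
    (K : Finset V) (P : Finset (V × V)) : ℚ :=
  (∑ v ∈ K, wv v) + ∑ e ∈ P, we e

/-- Any minimal set cover induces a subset `S = Vs \ K` whose cost equals the weight
of the cover; and the minimum of `graphCost` over subsets equals the minimum weighted
set cover (expressed by mutual domination). -/
theorem minimal_cover_induces_cost (Vs : Finset V) (Econf : Finset (V × V))
    (wv : V → ℚ) (we : V × V → ℚ)
    (hwv : ∀ v ∈ Vs, 0 ≤ wv v) (hwe : ∀ e ∈ Econf, 0 ≤ we e)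
    (hend : ∀ e ∈ Econf, e.1 ∈ Vs ∧ e.2 ∈ Vs)
    (hloop : ∀ e ∈ Econf, e.1 ≠ e.2) :
    (∀ (K : Finset V) (P : Finset (V × V)), K ⊆ Vs → P ⊆ Econf →
      IsCover Econf K P →
      (∀ v ∈ K, ¬ IsCover Econf (K.erase v) P) →
      (∀ e ∈ P, ¬ IsCover Econf K (P.erase e)) →
      graphCost Vs Econf wv we (Vs \ K) = coverWeight wv we K P) ∧
    (∀ S ⊆ Vs, ∃ K P, K ⊆ Vs ∧ P ⊆ Econf ∧ IsCover Econf K P ∧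
      coverWeight wv we K P ≤ graphCost Vs Econf wv we S) ∧
    (∀ (K : Finset V) (P : Finset (V × V)), K ⊆ Vs → P ⊆ Econf →
      IsCover Econf K P →
      ∃ S ⊆ Vs, graphCost Vs Econf wv we S ≤ coverWeight wv we K P) := by
  have hVK : ∀ K : Finset V, K ⊆ Vs → Vs \ (Vs \ K) = K := by
    intro K hK
    rw [Finset.sdiff_sdiff_eq_self hK]
  refine ⟨?_, ?_, ?_⟩
  · intro K P hK hP hcov hminK hminP
    unfold graphCost coverWeight
    rw [hVK K hK]
    congr 1
    congr 1
    ext e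
    simp only [Finset.mem_filter, Finset.mem_sdiff]
    constructor
    · rintro ⟨he, ⟨-, h1⟩, ⟨-, h2⟩⟩
      rcases hcov e he with h | h | h
      · exact absurd h h1
      · exact absurd h h2
      · exact h
    · intro heP
      have he := hP heP
      have hnc := hminP e heP
      unfold IsCover at hnc
      push_neg at hnc
      obtain ⟨f, hf, hf1, hf2, hfP⟩ := hnc
      have hfe : f = e := by
        rcases hcov f hf with h | h | h
        · exact absurd h hf1
        · exact absurd h hf2
        · by_contra hne
          exact hfP (Finset.mem_erase.mpr ⟨hne, h⟩)
      subst hfe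
      exact ⟨hf, ⟨(hend f hf).1, hf1⟩, ⟨(hend f hf).2, hf2⟩⟩
  · intro S hS
    refine ⟨Vs \ S, Econf.filter (fun e => e.1 ∈ S ∧ e.2 ∈ S),
      Finset.sdiff_subset, Finset.filter_subset _ _, ?_, ?_⟩
    · intro e he
      by_cases h1 : e.1 ∈ S
      · by_cases h2 : e.2 ∈ S
        · exact Or.inr (Or.inr (Finset.mem_filter.mpr ⟨he, h1, h2⟩))
        · exact Or.inr (Or.inl (Finset.mem_sdiff.mpr ⟨(hend e he).2, h2⟩))
      · exact Or.inl (Finset.mem_sdiff.mpr ⟨(hend e he).1, h1⟩)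
    · exact le_of_eq rfl
  · intro K P hK hP hcov
    refine ⟨Vs \ K, Finset.sdiff_subset, ?_⟩
    unfold graphCost coverWeight
    rw [hVK K hK]
    gcongr ?_ + ?_
    · exact le_refl _
    · apply Finset.sum_le_sum_of_subset_of_nonneg
      · intro e he
        simp only [Finset.mem_filter, Finset.mem_sdiff] at he
        obtain ⟨hE, ⟨-, h1⟩, ⟨-, h2⟩⟩ := he
        rcases hcov e hE with h | h | h
        · exact absurd h h1
        · exact absurd h h2
        · exact h
      · intro e heP _
        exact hwe e (hP heP)
end

section
/- Let D be a finite multiset of facts, and let B_1,…,B_q be a partition of D into 'subblocks' such that two distinct facts conflict (violate φ) if and only if they lie in different subblocks. Fix a number k. Define C[j,k] recursively by: C[0,0] = 0; C[0,k] = ∞ for k > 0; and C[j,k] = min over t ∈ {0,…,min(k,|B_j|)} of ( C[j-1, k-t] + t·(k-t)·w_φ + Σ_{f ∈ B_j ∖ top(t,B_j)} w_f ), where top(t,B_j) is a set of t facts of B_j of highest weight. Then C[q,k] equals the minimum of cost(E | B_1∪…∪B_q) over all subsets E of size exactly k. -/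
attribute [local instance] Classical.propDecidable

open Finset

/-- Number of unordered pairs of distinct facts of `E` violating `viol`. -/
noncomputable def numVio {F : Type*} [DecidableEq F] (viol : F → F → Prop)
    (E : Finset F) : ℕ :=
  ((E.powersetCard 2).filter (fun p => ∀ f ∈ p, ∀ g ∈ p, f ≠ g → viol f g)).card

/-- The dynamic-programming table `C[j,k]` of the single-FD algorithm:
`C[0,0] = 0`, `C[0,k] = ∞` for `k > 0`, and
`C[j,k] = min_{t ≤ min(k,|B_j|)} ( C[j-1,k-t] + t(k-t)·wφ + Σ_{f ∈ B_j ∖ top(t,B_j)} w f )`. -/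
noncomputable def DPC {F : Type*} [DecidableEq F] (w : F → ℚ) (wφ : ℚ)
    (top : ℕ → Finset F → Finset F) (B : ℕ → Finset F) : ℕ → ℕ → WithTop ℚ
  | 0, 0 => 0
  | 0, _ + 1 => ⊤
  | j + 1, k =>
      (Finset.range (k + 1)).inf fun t =>
        if t ≤ (B (j + 1)).card then
          DPC w wφ top B j (k - t) +
            ((((t * (k - t) : ℕ) : ℚ) * wφ +
                ∑ f ∈ B (j + 1) \ top t (B (j + 1)), w f : ℚ) : WithTop ℚ)
        else ⊤

section Aux

variable {F : Type*} [DecidableEq F]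

lemma numVio_empty (viol : F → F → Prop) :
    numVio viol (∅ : Finset F) = 0 := by
  have h : ((∅ : Finset F).powersetCard 2) = ∅ := by
    rw [Finset.powersetCard_eq_empty]; simp
  unfold numVio
  rw [h, Finset.filter_empty, Finset.card_empty]

lemma pair_mem_cases {a b x : F}
    (hx : x ∈ ({a, b} : Finset F)) : x = a ∨ x = b := by
  rcases Finset.mem_insert.mp hx with h | h
  · exact Or.inl h
  · exact Or.inr (Finset.mem_singleton.mp h)

lemma numVio_union (viol viol' : F → F → Prop)
    (A B : Finset F) (hAB : Disjoint A B)
    (hcross : ∀ f ∈ A, ∀ g ∈ B, viol f g ∧ viol g f)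
    (hB : ∀ f ∈ B, ∀ g ∈ B, f ≠ g → ¬ viol f g)
    (hA : ∀ f ∈ A, ∀ g ∈ A, f ≠ g → (viol f g ↔ viol' f g)) :
    numVio viol (A ∪ B) = numVio viol' A + A.card * B.card := by
  classical
  have hset :
      (((A ∪ B).powersetCard 2).filter (fun p => ∀ f ∈ p, ∀ g ∈ p, f ≠ g → viol f g))
        = ((A.powersetCard 2).filter (fun p => ∀ f ∈ p, ∀ g ∈ p, f ≠ g → viol' f g))
          ∪ (A ×ˢ B).image (fun x => ({x.1, x.2} : Finset F)) := by
    ext p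
    simp only [Finset.mem_filter, Finset.mem_powersetCard, Finset.mem_union,
      Finset.mem_image, Finset.mem_product]
    constructor
    · rintro ⟨⟨hsub, hc⟩, hP⟩
      obtain ⟨a, b, hab, rfl⟩ := Finset.card_eq_two.mp hc
      have ha := hsub (Finset.mem_insert_self a {b})
      have hb := hsub (by simp : b ∈ ({a, b} : Finset F))
      rw [Finset.mem_union] at ha hb
      rcases ha with ha | ha
      · rcases hb with hb | hb
        · left
          have hmem : ∀ x ∈ ({a, b} : Finset F), x ∈ A := by
            intro x hx
            rcases pair_mem_cases hx with rfl | rfl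
            · exact ha
            · exact hb
          refine ⟨⟨hmem, hc⟩, ?_⟩
          intro f hf g hg hfg
          exact (hA f (hmem f hf) g (hmem g hg) hfg).mp (hP f hf g hg hfg)
        · right; exact ⟨(a, b), ⟨ha, hb⟩, rfl⟩
      · rcases hb with hb | hb
        · right; refine ⟨(b, a), ⟨hb, ha⟩, ?_⟩
          simp only
          rw [Finset.pair_comm]
        · exact absurd (hP a (by simp) b (by simp) hab) (hB a ha b hb hab)
    · rintro (⟨⟨hsub, hc⟩, hP⟩ | ⟨⟨a, b⟩, ⟨ha, hb⟩, rfl⟩)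
      · refine ⟨⟨hsub.trans Finset.subset_union_left, hc⟩, ?_⟩
        intro f hf g hg hfg
        exact (hA f (hsub hf) g (hsub hg) hfg).mpr (hP f hf g hg hfg)
      · have hab : a ≠ b := fun h => Finset.disjoint_left.mp hAB ha (h ▸ hb)
        refine ⟨⟨?_, Finset.card_pair hab⟩, ?_⟩
        · intro x hx
          rcases pair_mem_cases hx with rfl | rfl
          · exact Finset.mem_union_left _ ha
          · exact Finset.mem_union_right _ hb
        · intro f hf g hg hfg
          rcases pair_mem_cases hf with rfl | rfl
          · rcases pair_mem_cases hg with rfl | rfl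
            · exact absurd rfl hfg
            · exact (hcross f ha g hb).1
          · rcases pair_mem_cases hg with rfl | rfl
            · exact (hcross g ha f hb).2
            · exact absurd rfl hfg
  have hdisj2 : Disjoint
      ((A.powersetCard 2).filter (fun p => ∀ f ∈ p, ∀ g ∈ p, f ≠ g → viol' f g))
      ((A ×ˢ B).image (fun x => ({x.1, x.2} : Finset F))) := by
    rw [Finset.disjoint_left]
    rintro p hp hp2
    simp only [Finset.mem_image, Finset.mem_product] at hp2
    obtain ⟨⟨a, b⟩, ⟨ha, hb⟩, rfl⟩ := hp2
    simp only [Finset.mem_filter, Finset.mem_powersetCard] at hp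
    have hsub := hp.1.1
    have : b ∈ A := hsub (by simp : b ∈ ({a, b} : Finset F))
    exact Finset.disjoint_left.mp hAB this hb
  have hinj : Set.InjOn (fun x : F × F => ({x.1, x.2} : Finset F)) (↑(A ×ˢ B) : Set (F × F)) := by
    rintro ⟨a, b⟩ hab ⟨c, d⟩ hcd h
    simp only [Finset.mem_coe, Finset.mem_product] at hab hcd
    simp only at h
    have ha : a ∈ ({c, d} : Finset F) := h ▸ Finset.mem_insert_self a {b}
    have hb : b ∈ ({c, d} : Finset F) := h ▸ (by simp : b ∈ ({a, b} : Finset F))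
    have hac : a = c := by
      rcases pair_mem_cases ha with h' | h'
      · exact h'
      · exact absurd (h' ▸ hab.1) (fun hh => Finset.disjoint_left.mp hAB hh hcd.2)
    have hbd : b = d := by
      rcases pair_mem_cases hb with h' | h'
      · exact absurd (h' ▸ hab.2) (fun hh => Finset.disjoint_right.mp hAB hh hcd.1)
      · exact h'
    simp [hac, hbd]
  unfold numVio
  rw [hset, Finset.card_union_of_disjoint hdisj2,
    Finset.card_image_of_injOn hinj, Finset.card_product]

lemma sum_le_sum_top (w : F → ℚ) (s T U : Finset F)
    (hT : T ⊆ s) (hcard : T.card = U.card)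
    (hw : ∀ f ∈ U, ∀ g ∈ s \ U, w g ≤ w f) :
    ∑ f ∈ T, w f ≤ ∑ f ∈ U, w f := by
  have hcards : (T \ U).card = (U \ T).card := by
    have h1 : (T ∩ U).card + (T \ U).card = T.card := Finset.card_inter_add_card_sdiff T U
    have h2 : (U ∩ T).card + (U \ T).card = U.card := Finset.card_inter_add_card_sdiff U T
    rw [Finset.inter_comm] at h2
    omega
  have key : ∑ f ∈ T \ U, w f ≤ ∑ f ∈ U \ T, w f := by
    have e := Finset.equivOfCardEq hcards
    calc ∑ f ∈ T \ U, w f = ∑ x ∈ (T \ U).attach, w x.1 := (Finset.sum_attach _ _).symm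
      _ ≤ ∑ x ∈ (T \ U).attach, w (e x).1 := by
          apply Finset.sum_le_sum
          intro x _
          have hx : (x : F) ∈ s \ U := by
            have := x.2
            simp only [Finset.mem_sdiff] at this ⊢
            exact ⟨hT this.1, this.2⟩
          have he : ((e x : F)) ∈ U := (Finset.mem_sdiff.mp (e x).2).1
          exact hw _ he _ hx
      _ = ∑ y ∈ (U \ T).attach, w y.1 := Finset.sum_equiv e (by simp) (by simp)
      _ = ∑ f ∈ U \ T, w f := Finset.sum_attach _ _
  have hT' : ∑ f ∈ T, w f = ∑ f ∈ T ∩ U, w f + ∑ f ∈ T \ U, w f :=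
    (Finset.sum_inter_add_sum_sdiff T U w).symm
  have hU' : ∑ f ∈ U, w f = ∑ f ∈ U ∩ T, w f + ∑ f ∈ U \ T, w f :=
    (Finset.sum_inter_add_sum_sdiff U T w).symm
  rw [hT', hU', Finset.inter_comm]
  linarith

/-- Block union up to `q`. -/
noncomputable def Dset (B : ℕ → Finset F) (q : ℕ) : Finset F :=
  (Finset.range q).biUnion fun j => B (j + 1)

/-- Cost of a repair. -/
noncomputable def costQ (w : F → ℚ) (wφ : ℚ) (B : ℕ → Finset F) (q : ℕ)
    (E : Finset F) : ℚ :=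
  (∑ f ∈ Dset B q \ E, w f) +
    wφ * (numVio (fun f g => ∀ j ∈ Finset.range q,
      ¬ (f ∈ B (j + 1) ∧ g ∈ B (j + 1))) E : ℚ)

theorem dp_aux (w : F → ℚ) (wφ : ℚ)
    (top : ℕ → Finset F → Finset F) (B : ℕ → Finset F)
    (hwφ : 0 ≤ wφ)
    (htopsub : ∀ t s, top t s ⊆ s)
    (htopcard : ∀ t s, (top t s).card = min t s.card)
    (htopw : ∀ t s, ∀ f ∈ top t s, ∀ g ∈ s \ top t s, w g ≤ w f) :
    ∀ q, (∀ i < q, ∀ j < q, i ≠ j → Disjoint (B (i + 1)) (B (j + 1))) → ∀ k,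
    DPC w wφ top B q k =
      ((Dset B q).powerset.filter (fun E => E.card = k)).inf
        (fun E => ((costQ w wφ B q E : ℚ) : WithTop ℚ)) := by
  intro q
  induction q with
  | zero =>
    intro _ k
    have hD0 : Dset B 0 = (∅ : Finset F) := by simp [Dset]
    match k with
    | 0 => simp [DPC, hD0, costQ, numVio_empty, Finset.filter_singleton]
    | k + 1 => simp [DPC, hD0, costQ, Finset.filter_singleton]
  | succ q ih =>
    intro hdisj k
    have hdisj' : ∀ i < q, ∀ j < q, i ≠ j → Disjoint (B (i + 1)) (B (j + 1)) :=
      fun i hi j hj hij => hdisj i (Nat.lt_succ_of_lt hi) j (Nat.lt_succ_of_lt hj) hij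
    have hD1 : Dset B (q + 1) = Dset B q ∪ B (q + 1) := by
      rw [Dset, Dset, Finset.range_add_one, Finset.biUnion_insert, Finset.union_comm]
    have hDdisj : Disjoint (Dset B q) (B (q + 1)) := by
      rw [Dset, Finset.disjoint_biUnion_left]
      intro j hj
      rw [Finset.mem_range] at hj
      exact hdisj j (Nat.lt_succ_of_lt hj) q (Nat.lt_succ_self q) (Nat.ne_of_lt hj)
    -- cost decomposition
    have hdecomp : ∀ E' T : Finset F, E' ⊆ Dset B q → T ⊆ B (q + 1) →
        costQ w wφ B (q + 1) (E' ∪ T)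
          = costQ w wφ B q E' +
              (((E'.card * T.card : ℕ) : ℚ) * wφ + ∑ f ∈ B (q + 1) \ T, w f) := by
      intro E' T hE' hT
      have hfB : ∀ f ∈ E', f ∉ B (q + 1) :=
        fun f hf => Finset.disjoint_left.mp hDdisj (hE' hf)
      have hsplit : Dset B (q + 1) \ (E' ∪ T) = (Dset B q \ E') ∪ (B (q + 1) \ T) := by
        rw [hD1]
        ext f
        simp only [Finset.mem_sdiff, Finset.mem_union]
        constructor
        · rintro ⟨hf | hf, hnot⟩
          · exact Or.inl ⟨hf, fun h => hnot (Or.inl h)⟩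
          · exact Or.inr ⟨hf, fun h => hnot (Or.inr h)⟩
        · rintro (⟨hf, hnot⟩ | ⟨hf, hnot⟩)
          · refine ⟨Or.inl hf, ?_⟩
            rintro (h | h)
            · exact hnot h
            · exact Finset.disjoint_left.mp hDdisj hf (hT h)
          · refine ⟨Or.inr hf, ?_⟩
            rintro (h | h)
            · exact Finset.disjoint_left.mp hDdisj (hE' h) hf
            · exact hnot h
      have hsumsplit : ∑ f ∈ Dset B (q + 1) \ (E' ∪ T), w f
          = (∑ f ∈ Dset B q \ E', w f) + ∑ f ∈ B (q + 1) \ T, w f := by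
        rw [hsplit, Finset.sum_union (Finset.disjoint_of_subset_left Finset.sdiff_subset
          (Finset.disjoint_of_subset_right Finset.sdiff_subset hDdisj))]
      have hvio : numVio (fun f g => ∀ j ∈ Finset.range (q + 1),
            ¬ (f ∈ B (j + 1) ∧ g ∈ B (j + 1))) (E' ∪ T)
          = numVio (fun f g => ∀ j ∈ Finset.range q,
            ¬ (f ∈ B (j + 1) ∧ g ∈ B (j + 1))) E' + E'.card * T.card := by
        apply numVio_union
        · exact Finset.disjoint_of_subset_left hE'
            (Finset.disjoint_of_subset_right hT hDdisj)
        · intro f hf g hg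
          have hgB := hT hg
          have hgD : ∀ i, i < q → g ∉ B (i + 1) := by
            intro i hi hgi
            exact Finset.disjoint_left.mp
              (hdisj i (Nat.lt_succ_of_lt hi) q (Nat.lt_succ_self q) (Nat.ne_of_lt hi))
              hgi hgB
          constructor
          · intro j hj
            rw [Finset.mem_range, Nat.lt_succ_iff_lt_or_eq] at hj
            rcases hj with hj | rfl
            · rintro ⟨_, hg2⟩; exact hgD j hj hg2
            · rintro ⟨hf2, _⟩; exact hfB f hf hf2
          · intro j hj
            rw [Finset.mem_range, Nat.lt_succ_iff_lt_or_eq] at hj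
            rcases hj with hj | rfl
            · rintro ⟨hg2, _⟩; exact hgD j hj hg2
            · rintro ⟨_, hf2⟩; exact hfB f hf hf2
        · intro f hf g hg hfg hviol
          exact hviol q (Finset.mem_range.mpr (Nat.lt_succ_self q)) ⟨hT hf, hT hg⟩
        · intro f hf g hg hfg
          constructor
          · intro h j hj
            exact h j (Finset.mem_range.mpr (Nat.lt_succ_of_lt (Finset.mem_range.mp hj)))
          · intro h j hj
            rw [Finset.mem_range, Nat.lt_succ_iff_lt_or_eq] at hj
            rcases hj with hj | rfl
            · exact h j (Finset.mem_range.mpr hj)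
            · rintro ⟨hf2, _⟩; exact hfB f hf hf2
      rw [costQ, costQ, hsumsplit, hvio]
      push_cast
      ring
    -- unfold DPC
    rw [show DPC w wφ top B (q + 1) k
        = (Finset.range (k + 1)).inf (fun t =>
            if t ≤ (B (q + 1)).card then
              DPC w wφ top B q (k - t) +
                ((((t * (k - t) : ℕ) : ℚ) * wφ +
                    ∑ f ∈ B (q + 1) \ top t (B (q + 1)), w f : ℚ) : WithTop ℚ)
            else ⊤) from rfl]
    apply le_antisymm
    · -- DPC ≤ cost of every E
      apply Finset.le_inf
      intro E hE
      simp only [Finset.mem_filter, Finset.mem_powerset] at hE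
      obtain ⟨hEsub, hEcard⟩ := hE
      set T := E ∩ B (q + 1) with hTdef
      set E' := E \ B (q + 1) with hE'def
      have hTsub : T ⊆ B (q + 1) := Finset.inter_subset_right
      have hE'sub : E' ⊆ Dset B q := by
        intro f hf
        rw [hE'def, Finset.mem_sdiff] at hf
        have := hEsub hf.1
        rw [hD1, Finset.mem_union] at this
        rcases this with h | h
        · exact h
        · exact absurd h hf.2
      have hunion : E' ∪ T = E := Finset.sdiff_union_inter E (B (q + 1))
      have hcards : T.card + E'.card = k := by
        rw [← hEcard, hTdef, hE'def]
        exact Finset.card_inter_add_card_sdiff E (B (q + 1))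
      have ht_le_k : T.card ≤ k := by omega
      have htB : T.card ≤ (B (q + 1)).card := Finset.card_le_card hTsub
      refine le_trans (Finset.inf_le (Finset.mem_range.mpr (Nat.lt_succ_of_le ht_le_k))) ?_
      rw [if_pos htB]
      have hE'card : E'.card = k - T.card := by omega
      have h1 : DPC w wφ top B q (k - T.card)
          ≤ ((costQ w wφ B q E' : ℚ) : WithTop ℚ) := by
        rw [ih hdisj' (k - T.card)]
        exact Finset.inf_le (by
          simp only [Finset.mem_filter, Finset.mem_powerset]
          exact ⟨hE'sub, hE'card⟩)
      have hsumle : ∑ f ∈ B (q + 1) \ top T.card (B (q + 1)), w f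
          ≤ ∑ f ∈ B (q + 1) \ T, w f := by
        have hUcard : (top T.card (B (q + 1))).card = T.card := by
          rw [htopcard]; omega
        have hkey : ∑ f ∈ T, w f ≤ ∑ f ∈ top T.card (B (q + 1)), w f :=
          sum_le_sum_top w (B (q + 1)) T _ hTsub hUcard.symm (htopw _ _)
        rw [Finset.sum_sdiff_eq_sub (htopsub _ _), Finset.sum_sdiff_eq_sub hTsub]
        linarith
      calc DPC w wφ top B q (k - T.card) +
            ((((T.card * (k - T.card) : ℕ) : ℚ) * wφ +
                ∑ f ∈ B (q + 1) \ top T.card (B (q + 1)), w f : ℚ) : WithTop ℚ)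
          ≤ ((costQ w wφ B q E' : ℚ) : WithTop ℚ) +
            ((((T.card * (k - T.card) : ℕ) : ℚ) * wφ +
                ∑ f ∈ B (q + 1) \ T, w f : ℚ) : WithTop ℚ) := by
            apply add_le_add h1
            rw [WithTop.coe_le_coe]
            exact add_le_add_right hsumle _
        _ = ((costQ w wφ B (q + 1) E : ℚ) : WithTop ℚ) := by
            rw [← hunion, hdecomp E' T hE'sub hTsub, ← WithTop.coe_add,
              WithTop.coe_inj, hE'card]
            push_cast
            ring
    · -- cost-inf ≤ each DP term
      apply Finset.le_inf
      intro t ht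
      rw [Finset.mem_range, Nat.lt_succ_iff] at ht
      by_cases htB : t ≤ (B (q + 1)).card
      · rw [if_pos htB]
        rw [ih hdisj' (k - t)]
        by_cases hne : ((Dset B q).powerset.filter (fun E => E.card = k - t)).Nonempty
        · obtain ⟨E₀, hE₀mem, hinfeq⟩ :=
            Finset.exists_mem_eq_inf _ hne
              (fun E => ((costQ w wφ B q E : ℚ) : WithTop ℚ))
          rw [hinfeq]
          simp only [Finset.mem_filter, Finset.mem_powerset] at hE₀mem
          obtain ⟨hE₀sub, hE₀card⟩ := hE₀mem
          set U := top t (B (q + 1)) with hUdef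
          have hUsub : U ⊆ B (q + 1) := htopsub _ _
          have hUcard : U.card = t := by rw [hUdef, htopcard]; omega
          have hEdisj : Disjoint E₀ U :=
            Finset.disjoint_of_subset_left hE₀sub
              (Finset.disjoint_of_subset_right hUsub hDdisj)
          have hmem : E₀ ∪ U ∈ (Dset B (q + 1)).powerset.filter (fun E => E.card = k) := by
            simp only [Finset.mem_filter, Finset.mem_powerset]
            constructor
            · rw [hD1]
              exact Finset.union_subset_union hE₀sub hUsub
            · rw [Finset.card_union_of_disjoint hEdisj, hE₀card, hUcard]
              omega
          refine le_trans (Finset.inf_le hmem) ?_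
          rw [hdecomp E₀ U hE₀sub hUsub, hE₀card, hUcard]
          rw [← WithTop.coe_add, WithTop.coe_le_coe]
          have : ((k - t) * t : ℕ) = (t * (k - t) : ℕ) := by ring
          rw [this]
        · rw [Finset.not_nonempty_iff_eq_empty] at hne
          rw [hne, Finset.inf_empty, top_add]
          exact le_top
      · rw [if_neg htB]
        exact le_top

end Aux

/-- Correctness of the dynamic program: `C[q,k]` equals the minimum of
`cost(E | B_1 ∪ … ∪ B_q)` over subsets `E` of size exactly `k`, where two distinct
facts conflict iff they lie in different subblocks. -/
theorem dp_single_fd_correct {F : Type*} [DecidableEq F] (w : F → ℚ) (wφ : ℚ)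
    (top : ℕ → Finset F → Finset F) (B : ℕ → Finset F) (q k : ℕ)
    (hw : ∀ f, 0 ≤ w f) (hwφ : 0 ≤ wφ)
    (hdisj : ∀ i < q, ∀ j < q, i ≠ j → Disjoint (B (i + 1)) (B (j + 1)))
    (htopsub : ∀ t s, top t s ⊆ s)
    (htopcard : ∀ t s, (top t s).card = min t s.card)
    (htopw : ∀ t s, ∀ f ∈ top t s, ∀ g ∈ s \ top t s, w g ≤ w f) :
    DPC w wφ top B q k =
      ((((Finset.range q).biUnion (fun j => B (j + 1))).powerset.filter
          (fun E => E.card = k)).inf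
        (fun E =>
          (((∑ f ∈ ((Finset.range q).biUnion (fun j => B (j + 1))) \ E, w f) +
              wφ * (numVio
                (fun f g => ∀ j ∈ Finset.range q,
                  ¬ (f ∈ B (j + 1) ∧ g ∈ B (j + 1))) E : ℚ) : ℚ) : WithTop ℚ))) := by
  exact dp_aux w wφ top B hwφ htopsub htopcard htopw q hdisj k
end

section
/- In the flow network N_k constructed from a database D over R(A,B) with FDs φ₁ = A→B and φ₂ = B→A, for every subset E ⊆ D with |E| = k, the assignment f_E (routing one unit through the edge (v_a, u_b) for each fact R(a,b) ∈ E, filling the parallel unit-capacity edges (s', v_a^i), (v_a^i, v_a) for i = 1,…,#_{E.A}(a) and similarly on the B side, and k units through (s,s')) is a valid integral flow of value k, and its cost equals w_D(E) = Σ_{f∈E}(−w_f) + w_{φ₁}·|vio(E,φ₁)| + w_{φ₂}·|vio(E,φ₂)|. -/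
attribute [local instance] Classical.propDecidable

open Finset

/-- Nodes of the flow network `N_k`: source `s`, auxiliary node `sp = s'`,
sink `t`, left copies `vAi a i` and left block nodes `vA a`, right block nodes
`uB b` and right copies `uBi b i` (the index `i : Fin n` stands for `i+1`). -/
inductive FNode (α β : Type*) (n : ℕ) where
  | s | sp | t
  | vAi (a : α) (i : Fin n)
  | vA (a : α)
  | uB (b : β)
  | uBi (b : β) (i : Fin n)
  deriving DecidableEq, Fintype

variable {α β : Type*} [DecidableEq α] [DecidableEq β]

/-- `#_{D.A}(a)`, the number of facts of `D` with `A`-value `a`. -/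
def cntA (D : Finset (α × β)) (a : α) : ℕ := (D.filter (fun f => f.1 = a)).card

/-- `#_{D.B}(b)`. -/
def cntB (D : Finset (α × β)) (b : β) : ℕ := (D.filter (fun f => f.2 = b)).card

/-- Edge capacities of `N_k`: `(s,s')` has capacity `k`, all other edges capacity 1. -/
def capN (D : Finset (α × β)) (k : ℕ) :
    FNode α β D.card → FNode α β D.card → ℕ
  | .s, .sp => k
  | .sp, .vAi a i => if i.val < cntA D a then 1 else 0
  | .vAi a i, .vA a' => if a = a' ∧ i.val < cntA D a then 1 else 0
  | .vA a, .uB b => if (a, b) ∈ D then 1 else 0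
  | .uB b, .uBi b' i => if b = b' ∧ i.val < cntB D b then 1 else 0
  | .uBi b i, .t => if i.val < cntB D b then 1 else 0
  | _, _ => 0

/-- Edge costs of `N_k`: `(v_a^{i+1}, v_a)` costs `i·w₁`, `(v_a,u_b)` costs `−w f`
for the fact `f = (a,b)`, `(u_b, u_b^{i+1})` costs `i·w₂`; all other edges cost 0. -/
noncomputable def ecostN (D : Finset (α × β)) (w : α × β → ℚ) (w1 w2 : ℚ) :
    FNode α β D.card → FNode α β D.card → ℚ
  | .vAi a i, .vA a' => if a = a' then (i.val : ℚ) * w1 else 0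
  | .vA a, .uB b => if (a, b) ∈ D then -w (a, b) else 0
  | .uB b, .uBi b' i => if b = b' then (i.val : ℚ) * w2 else 0
  | _, _ => 0

/-- An integral flow on `N_k`: capacities respected and flow conserved at every
node other than the source and the sink. -/
def IsFlow [Fintype α] [Fintype β] (D : Finset (α × β)) (k : ℕ)
    (g : FNode α β D.card → FNode α β D.card → ℕ) : Prop :=
  (∀ u v, g u v ≤ capN D k u v) ∧
  (∀ v : FNode α β D.card, v ≠ FNode.s → v ≠ FNode.t →
    (∑ u, g u v) = ∑ u, g v u)

/-- The value of a flow. -/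
def flowValue [Fintype α] [Fintype β] {n : ℕ}
    (g : FNode α β n → FNode α β n → ℕ) : ℕ :=
  ∑ v, g FNode.s v

/-- The cost of a flow: `Σ_e g(e)·c(e)`. -/
noncomputable def flowCost [Fintype α] [Fintype β] (D : Finset (α × β))
    (w : α × β → ℚ) (w1 w2 : ℚ)
    (g : FNode α β D.card → FNode α β D.card → ℕ) : ℚ :=
  ∑ u, ∑ v, (g u v : ℚ) * ecostN D w w1 w2 u v

/-- `w_D(E)` for `Δ = {A→B, B→A}` with weights `w₁, w₂`. -/
noncomputable def wDAB (w : α × β → ℚ) (w1 w2 : ℚ) (E : Finset (α × β)) : ℚ :=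
  (∑ f ∈ E, -(w f)) +
    w1 * (numVio (fun f g => f.1 = g.1 ∧ f.2 ≠ g.2) E : ℚ) +
    w2 * (numVio (fun f g => f.2 = g.2 ∧ f.1 ≠ g.1) E : ℚ)

/-- The flow `f_E` induced by a subset `E ⊆ D`. -/
def fE (D E : Finset (α × β)) :
    FNode α β D.card → FNode α β D.card → ℕ
  | .s, .sp => E.card
  | .sp, .vAi a i => if i.val < cntA E a then 1 else 0
  | .vAi a i, .vA a' => if a = a' ∧ i.val < cntA E a then 1 else 0
  | .vA a, .uB b => if (a, b) ∈ E then 1 else 0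
  | .uB b, .uBi b' i => if b = b' ∧ i.val < cntB E b then 1 else 0
  | .uBi b i, .t => if i.val < cntB E b then 1 else 0
  | _, _ => 0

section Aux

/-- Explicit equivalence used to decompose sums over `FNode`. -/
def fnodeEquiv (α β : Type*) (n : ℕ) :
    FNode α β n ≃ (Unit ⊕ Unit ⊕ Unit ⊕ (α × Fin n) ⊕ α ⊕ β ⊕ (β × Fin n)) where
  toFun x := match x with
    | .s => .inl ()
    | .sp => .inr (.inl ())
    | .t => .inr (.inr (.inl ()))
    | .vAi a i => .inr (.inr (.inr (.inl (a, i))))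
    | .vA a => .inr (.inr (.inr (.inr (.inl a))))
    | .uB b => .inr (.inr (.inr (.inr (.inr (.inl b)))))
    | .uBi b i => .inr (.inr (.inr (.inr (.inr (.inr (b, i))))))
  invFun y := match y with
    | .inl () => .s
    | .inr (.inl ()) => .sp
    | .inr (.inr (.inl ())) => .t
    | .inr (.inr (.inr (.inl (a, i)))) => .vAi a i
    | .inr (.inr (.inr (.inr (.inl a)))) => .vA a
    | .inr (.inr (.inr (.inr (.inr (.inl b))))) => .uB b
    | .inr (.inr (.inr (.inr (.inr (.inr (b, i)))))) => .uBi b i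
  left_inv x := by cases x <;> rfl
  right_inv y := by
    rcases y with ⟨⟩ | ⟨⟩ | ⟨⟩ | ⟨a, i⟩ | a | b | ⟨b, i⟩ <;> rfl

lemma sum_fnode [Fintype α] [Fintype β] {n : ℕ} {M : Type*} [AddCommMonoid M]
    (f : FNode α β n → M) :
    ∑ x, f x = f .s + f .sp + f .t + (∑ a, ∑ i, f (.vAi a i)) +
      (∑ a, f (.vA a)) + (∑ b, f (.uB b)) + (∑ b, ∑ i, f (.uBi b i)) := by
  rw [← Equiv.sum_comp (fnodeEquiv α β n).symm f]
  simp only [Fintype.sum_sum_type, Fintype.sum_prod_type, Finset.univ_unique,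
    Finset.sum_singleton, fnodeEquiv, Equiv.coe_fn_symm_mk]
  abel

lemma cnt_mono {D E : Finset (α × β)} (hE : E ⊆ D) (a : α) :
    cntA E a ≤ cntA D a :=
  Finset.card_le_card (Finset.filter_subset_filter _ hE)

lemma cntB_mono {D E : Finset (α × β)} (hE : E ⊆ D) (b : β) :
    cntB E b ≤ cntB D b :=
  Finset.card_le_card (Finset.filter_subset_filter _ hE)

lemma cntA_le_card (E : Finset (α × β)) (a : α) : cntA E a ≤ E.card :=
  Finset.card_le_card (Finset.filter_subset _ _)

lemma cntB_le_card (E : Finset (α × β)) (b : β) : cntB E b ≤ E.card :=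
  Finset.card_le_card (Finset.filter_subset _ _)

lemma sum_cntA [Fintype α] (E : Finset (α × β)) :
    ∑ a, cntA E a = E.card := by
  rw [Finset.card_eq_sum_card_fiberwise (f := Prod.fst) (t := Finset.univ)
    (fun x _ => Finset.mem_univ _)]
  rfl

lemma sum_cntB [Fintype β] (E : Finset (α × β)) :
    ∑ b, cntB E b = E.card := by
  rw [Finset.card_eq_sum_card_fiberwise (f := Prod.snd) (t := Finset.univ)
    (fun x _ => Finset.mem_univ _)]
  rfl

lemma cntA_eq_sum [Fintype β] (E : Finset (α × β)) (a : α) :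
    cntA E a = ∑ b, if (a, b) ∈ E then 1 else 0 := by
  rw [← Finset.card_filter]
  apply Finset.card_bij (fun f _ => f.2)
  · rintro ⟨x, y⟩ hf
    simp only [Finset.mem_filter, Finset.mem_univ, true_and] at *
    obtain ⟨h1, h2⟩ := hf
    subst h2; exact h1
  · rintro ⟨x, y⟩ hf ⟨x', y'⟩ hg h
    simp only [Finset.mem_filter] at hf hg
    cases h; rw [hf.2, hg.2]
  · intro b hb
    simp only [Finset.mem_filter, Finset.mem_univ, true_and] at hb
    exact ⟨(a, b), Finset.mem_filter.2 ⟨hb, rfl⟩, rfl⟩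

lemma cntB_eq_sum [Fintype α] (E : Finset (α × β)) (b : β) :
    cntB E b = ∑ a, if (a, b) ∈ E then 1 else 0 := by
  rw [← Finset.card_filter]
  apply Finset.card_bij (fun f _ => f.1)
  · rintro ⟨x, y⟩ hf
    simp only [Finset.mem_filter, Finset.mem_univ, true_and] at *
    obtain ⟨h1, h2⟩ := hf
    subst h2; exact h1
  · rintro ⟨x, y⟩ hf ⟨x', y'⟩ hg h
    simp only [Finset.mem_filter] at hf hg
    cases h; rw [hf.2, hg.2]
  · intro a ha
    simp only [Finset.mem_filter, Finset.mem_univ, true_and] at ha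
    exact ⟨(a, b), Finset.mem_filter.2 ⟨ha, rfl⟩, rfl⟩

lemma sum_fin_indicator {n ℓ : ℕ} (h : ℓ ≤ n) :
    (∑ i : Fin n, if i.val < ℓ then 1 else 0) = ℓ := by
  rw [Fin.sum_univ_eq_sum_range (fun i => if i < ℓ then 1 else 0)]
  rw [← Finset.sum_subset (Finset.range_subset_range.2 h)
      (fun x _ hx => by simp [Finset.mem_range] at hx ⊢; omega)]
  rw [Finset.sum_ite_of_true (fun x hx => Finset.mem_range.1 hx)]
  simp

lemma sum_range_id_eq_choose (ℓ : ℕ) :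
    ∑ i ∈ Finset.range ℓ, i = ℓ.choose 2 := by
  rw [Nat.choose_two_right, ← Finset.sum_range_id_mul_two ℓ]
  omega

lemma sum_fin_cost {n ℓ : ℕ} (h : ℓ ≤ n) (c : ℚ) :
    (∑ i : Fin n, if i.val < ℓ then (i.val : ℚ) * c else 0) =
      (ℓ.choose 2 : ℚ) * c := by
  rw [Fin.sum_univ_eq_sum_range (fun i => if i < ℓ then (i : ℚ) * c else 0)]
  rw [← Finset.sum_subset (Finset.range_subset_range.2 h)
      (fun x _ hx => by simp [Finset.mem_range] at hx ⊢; omega)]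
  rw [Finset.sum_ite_of_true (by simp [Finset.mem_range])]
  rw [← Finset.sum_mul, ← Nat.cast_sum, sum_range_id_eq_choose]

lemma numVioA [Fintype α] (E : Finset (α × β)) :
    numVio (fun f g => f.1 = g.1 ∧ f.2 ≠ g.2) E = ∑ a, (cntA E a).choose 2 := by
  unfold numVio
  have hset : (E.powersetCard 2).filter
      (fun p => ∀ f ∈ p, ∀ g ∈ p, f ≠ g → f.1 = g.1 ∧ f.2 ≠ g.2) =
      Finset.univ.biUnion
        (fun a => Finset.powersetCard 2 (E.filter (fun f => f.1 = a))) := by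
    ext p
    simp only [Finset.mem_filter, Finset.mem_powersetCard, Finset.mem_biUnion,
      Finset.mem_univ, true_and]
    constructor
    · rintro ⟨⟨hpE, hp2⟩, hviol⟩
      have hpos : 0 < p.card := by omega
      obtain ⟨f, hf⟩ := Finset.card_pos.1 hpos
      refine ⟨f.1, ⟨fun g hg => Finset.mem_filter.2 ⟨hpE hg, ?_⟩, hp2⟩⟩
      by_cases hfg : g = f
      · subst hfg; rfl
      · exact ((hviol g hg f hf hfg).1)
    · rintro ⟨a, hpa, hp2⟩
      refine ⟨⟨hpa.trans (Finset.filter_subset _ _), hp2⟩, ?_⟩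
      intro f hf g hg hfg
      have hf1 : f.1 = a := (Finset.mem_filter.1 (hpa hf)).2
      have hg1 : g.1 = a := (Finset.mem_filter.1 (hpa hg)).2
      refine ⟨hf1.trans hg1.symm, fun h2 => hfg ?_⟩
      exact Prod.ext (hf1.trans hg1.symm) h2
  have hdisj : ∀ a ∈ (Finset.univ : Finset α), ∀ a' ∈ Finset.univ, a ≠ a' →
      Disjoint (Finset.powersetCard 2 (E.filter (fun f => f.1 = a)))
        (Finset.powersetCard 2 (E.filter (fun f => f.1 = a'))) := by
    intro a _ a' _ haa'
    refine Finset.disjoint_left.2 fun p hp hp' => ?_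
    simp only [Finset.mem_powersetCard] at hp hp'
    have hpos : 0 < p.card := by omega
    obtain ⟨f, hf⟩ := Finset.card_pos.1 hpos
    have h1 := (Finset.mem_filter.1 (hp.1 hf)).2
    have h2 := (Finset.mem_filter.1 (hp'.1 hf)).2
    exact haa' (h1 ▸ h2 ▸ rfl)
  have key : ((E.powersetCard 2).filter
      (fun p => ∀ f ∈ p, ∀ g ∈ p, f ≠ g → f.1 = g.1 ∧ f.2 ≠ g.2)).card =
      ∑ a, (cntA E a).choose 2 := by
    rw [hset, Finset.card_biUnion hdisj]
    exact Finset.sum_congr rfl fun a _ => by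
      rw [Finset.card_powersetCard]; rfl
  convert key using 2
  ext p
  simp [Finset.mem_filter]

lemma numVioB [Fintype β] (E : Finset (α × β)) :
    numVio (fun f g => f.2 = g.2 ∧ f.1 ≠ g.1) E = ∑ b, (cntB E b).choose 2 := by
  unfold numVio
  have hset : (E.powersetCard 2).filter
      (fun p => ∀ f ∈ p, ∀ g ∈ p, f ≠ g → f.2 = g.2 ∧ f.1 ≠ g.1) =
      Finset.univ.biUnion
        (fun b => Finset.powersetCard 2 (E.filter (fun f => f.2 = b))) := by
    ext p
    simp only [Finset.mem_filter, Finset.mem_powersetCard, Finset.mem_biUnion,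
      Finset.mem_univ, true_and]
    constructor
    · rintro ⟨⟨hpE, hp2⟩, hviol⟩
      have hpos : 0 < p.card := by omega
      obtain ⟨f, hf⟩ := Finset.card_pos.1 hpos
      refine ⟨f.2, ⟨fun g hg => Finset.mem_filter.2 ⟨hpE hg, ?_⟩, hp2⟩⟩
      by_cases hfg : g = f
      · subst hfg; rfl
      · exact ((hviol g hg f hf hfg).1)
    · rintro ⟨b, hpb, hp2⟩
      refine ⟨⟨hpb.trans (Finset.filter_subset _ _), hp2⟩, ?_⟩
      intro f hf g hg hfg
      have hf1 : f.2 = b := (Finset.mem_filter.1 (hpb hf)).2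
      have hg1 : g.2 = b := (Finset.mem_filter.1 (hpb hg)).2
      refine ⟨hf1.trans hg1.symm, fun h2 => hfg ?_⟩
      exact Prod.ext h2 (hf1.trans hg1.symm)
  have hdisj : ∀ b ∈ (Finset.univ : Finset β), ∀ b' ∈ Finset.univ, b ≠ b' →
      Disjoint (Finset.powersetCard 2 (E.filter (fun f => f.2 = b)))
        (Finset.powersetCard 2 (E.filter (fun f => f.2 = b'))) := by
    intro b _ b' _ hbb'
    refine Finset.disjoint_left.2 fun p hp hp' => ?_
    simp only [Finset.mem_powersetCard] at hp hp'
    have hpos : 0 < p.card := by omega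
    obtain ⟨f, hf⟩ := Finset.card_pos.1 hpos
    have h1 := (Finset.mem_filter.1 (hp.1 hf)).2
    have h2 := (Finset.mem_filter.1 (hp'.1 hf)).2
    exact hbb' (h1 ▸ h2 ▸ rfl)
  have key : ((E.powersetCard 2).filter
      (fun p => ∀ f ∈ p, ∀ g ∈ p, f ≠ g → f.2 = g.2 ∧ f.1 ≠ g.1)).card =
      ∑ b, (cntB E b).choose 2 := by
    rw [hset, Finset.card_biUnion hdisj]
    exact Finset.sum_congr rfl fun b _ => by
      rw [Finset.card_powersetCard]; rfl
  convert key using 2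
  ext p
  simp [Finset.mem_filter]

end Aux

/-- Lemma 3 of the paper: for every `E ⊆ D` with `|E| = k`, `f_E` is a valid
integral flow of value `k` in `N_k`, and its cost equals `w_D(E)`. -/
theorem fE_is_flow_and_cost [Fintype α] [Fintype β]
    (D E : Finset (α × β)) (hE : E ⊆ D)
    (w : α × β → ℚ) (w1 w2 : ℚ)
    (hw : ∀ f ∈ D, 0 ≤ w f) (h1 : 0 ≤ w1) (h2 : 0 ≤ w2) :
    IsFlow D E.card (fE D E) ∧
    flowValue (fE D E) = E.card ∧
    flowCost D w w1 w2 (fE D E) = wDAB w w1 w2 E := by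
  have hAE : ∀ a, cntA E a ≤ D.card :=
    fun a => (cnt_mono hE a).trans (cntA_le_card D a)
  have hBE : ∀ b, cntB E b ≤ D.card :=
    fun b => (cntB_mono hE b).trans (cntB_le_card D b)
  refine ⟨⟨?_, ?_⟩, ?_, ?_⟩
  · -- capacities
    intro u v
    cases u <;> cases v <;>
      simp only [fE, capN, le_refl, Nat.zero_le] <;>
      split_ifs with h1 h2 <;>
      first
        | rfl
        | omega
        | (exact absurd (hE h1) h2)
        | (exact absurd (h1.trans_le (cnt_mono hE _)) h2)
        | (exact absurd (h1.trans_le (cntB_mono hE _)) h2)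
        | (exact absurd (And.intro h1.1 (h1.2.trans_le (cnt_mono hE _))) h2)
        | (exact absurd (And.intro h1.1 (h1.2.trans_le (cntB_mono hE _))) h2)
  · -- conservation
    intro v hs ht
    cases v with
    | s => exact absurd rfl hs
    | t => exact absurd rfl ht
    | sp =>
        rw [sum_fnode (fun u => fE D E u .sp), sum_fnode (fun u => fE D E .sp u)]
        simp only [fE]
        rw [Finset.sum_congr rfl (fun a _ => sum_fin_indicator (hAE a)), sum_cntA]
        simp
    | vAi a i =>
        rw [sum_fnode (fun u => fE D E u (.vAi a i)),
          sum_fnode (fun u => fE D E (.vAi a i) u)]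
        simp [fE, ite_and]
    | vA a =>
        rw [sum_fnode (fun u => fE D E u (.vA a)),
          sum_fnode (fun u => fE D E (.vA a) u)]
        simp only [fE, Finset.sum_const_zero, add_zero, zero_add]
        have hx : ∀ x : α, (∑ i : Fin D.card,
            if x = a ∧ (i : ℕ) < cntA E x then 1 else 0)
            = if x = a then cntA E a else 0 := by
          intro x
          by_cases hxa : x = a
          · subst hxa
            simp only [true_and, if_pos rfl]
            exact sum_fin_indicator (hAE x)
          · simp [hxa]
        rw [Finset.sum_congr rfl (fun x _ => hx x),
          Finset.sum_ite_eq' Finset.univ a (fun _ => cntA E a),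
          if_pos (Finset.mem_univ a), cntA_eq_sum]
    | uB b =>
        rw [sum_fnode (fun u => fE D E u (.uB b)),
          sum_fnode (fun u => fE D E (.uB b) u)]
        simp only [fE, Finset.sum_const_zero, add_zero, zero_add]
        have hx : ∀ x : β, (∑ i : Fin D.card,
            if b = x ∧ (i : ℕ) < cntB E b then 1 else 0)
            = if b = x then cntB E b else 0 := by
          intro x
          by_cases hxb : b = x
          · subst hxb
            simp only [true_and, if_pos rfl]
            exact sum_fin_indicator (hBE b)
          · simp [hxb]
        rw [Finset.sum_congr rfl (fun x _ => hx x),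
          Finset.sum_ite_eq Finset.univ b (fun _ => cntB E b),
          if_pos (Finset.mem_univ b), cntB_eq_sum]
    | uBi b i =>
        rw [sum_fnode (fun u => fE D E u (.uBi b i)),
          sum_fnode (fun u => fE D E (.uBi b i) u)]
        simp [fE, ite_and]
  · -- value
    rw [flowValue, sum_fnode (fun v => fE D E .s v)]
    simp [fE]
  · -- cost
    rw [flowCost]
    simp only [sum_fnode]
    simp only [fE, ecostN, Finset.sum_const_zero, add_zero, zero_add,
      Nat.cast_ite, Nat.cast_one, Nat.cast_zero, ite_mul, mul_ite, zero_mul,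
      mul_zero, one_mul, ite_and, Finset.sum_ite_eq, Finset.sum_ite_eq',
      Finset.mem_univ, if_true]
    have hu : ∀ x x1 : β, (∑ i : Fin D.card,
        if x = x1 then if x = x1 then
          (if (i : ℕ) < cntB E x then (i : ℚ) * w2 else 0) else 0 else 0) =
        if x = x1 then
          (∑ i : Fin D.card, if (i : ℕ) < cntB E x then (i : ℚ) * w2 else 0)
        else 0 := by
      intro x x1; by_cases h : x = x1 <;> simp [h]
    rw [Finset.sum_congr rfl
      (fun x _ => Finset.sum_congr rfl (fun x1 _ => hu x x1))]
    simp only [Finset.sum_ite_eq, Finset.mem_univ, if_true]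
    rw [Finset.sum_congr rfl (fun a _ => sum_fin_cost (hAE a) w1),
      Finset.sum_congr rfl (fun b _ => sum_fin_cost (hBE b) w2),
      ← Finset.sum_mul, ← Finset.sum_mul]
    have hmid : ∀ p : α × β,
        (if p ∈ D then if p ∈ E then -w p else 0 else 0) =
        if p ∈ E then -w p else 0 := by
      intro p
      by_cases hp : p ∈ E
      · simp [hp, hE hp]
      · simp [hp]
    rw [← Fintype.sum_prod_type (f := fun p : α × β =>
        if p ∈ D then if p ∈ E then -w p else 0 else 0),
      Finset.sum_congr rfl (fun p _ => hmid p)]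
    rw [Finset.sum_ite_mem, Finset.univ_inter]
    rw [wDAB, numVioA, numVioB, Nat.cast_sum, Nat.cast_sum]
    ring
end

section
/- Let R̂(A_1,…,A_k) be a schema and Δ̂ = {X→Y, X'→Y'} be a matching constraint, i.e., X∪Y = X'∪Y' = X∪X' = {A_1,…,A_k}. For any two distinct facts f̂, ĝ of a database D̂ over R̂: {f̂, ĝ} violates X→Y if and only if f̂[X] = ĝ[X] and f̂[X'] ≠ ĝ[X']. -/
open Finset

/-- The facts `f, g` agree on all attributes of `X`. -/
def agreeOn {Attr Val : Type*} (X : Finset Attr) (f g : Attr → Val) : Prop :=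
  ∀ A ∈ X, f A = g A

/-- For a matching constraint `Δ̂ = {X→Y, X'→Y'}` (i.e. `X∪Y = X'∪Y' = X∪X' = `
all attributes), a pair of distinct facts violates `X→Y` iff it agrees on `X`
and disagrees on `X'`. -/
theorem matching_constraint_violation_iff {Attr Val : Type*} [Fintype Attr] [DecidableEq Attr]
    (X Y X' Y' : Finset Attr)
    (hXY : X ∪ Y = Finset.univ) (hX'Y' : X' ∪ Y' = Finset.univ)
    (hXX' : X ∪ X' = Finset.univ)
    (f g : Attr → Val) (hfg : f ≠ g) :
    (agreeOn X f g ∧ ¬ agreeOn Y f g) ↔ (agreeOn X f g ∧ ¬ agreeOn X' f g) := by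
  have key : ∀ Z : Finset Attr, X ∪ Z = Finset.univ →
      (agreeOn X f g → ¬ agreeOn Z f g) := by
    intro Z hZ hX hZa
    apply hfg
    funext A
    have : A ∈ X ∪ Z := by rw [hZ]; exact mem_univ A
    rcases mem_union.mp this with h | h
    · exact hX A h
    · exact hZa A h
  constructor
  · rintro ⟨hX, -⟩; exact ⟨hX, key X' hXX' hX⟩
  · rintro ⟨hX, -⟩; exact ⟨hX, key Y hXY hX⟩
end

section
/- Let R̂(A_1,…,A_k) be a schema and Δ̂ = {X→Y, X'→Y'} a matching constraint (X∪Y = X'∪Y' = X∪X' = {A_1,…,A_k}). Define the map sending each fact f̂ to the pair f = (f̂[X], f̂[X']) over binary schema R(A,B). This map is injective on any database D̂, and for every subset Ê ⊆ D̂ with image E: |vio(Ê, X→Y)| = |vio(E, A→B)| and |vio(Ê, X'→Y')| = |vio(E, B→A)|. Consequently, with w_f = w_{f̂}, w_{A→B} = w_{X→Y}, w_{B→A} = w_{X'→Y'}, we have cost(Ê | D̂) = cost(E | D), and Ê is an optimal subset of D̂ iff E is an optimal subset of D. -/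
attribute [local instance] Classical.propDecidable

open Finset

variable {Attr Val : Type*} [Fintype Attr] [DecidableEq Attr] [DecidableEq Val]

/-- The reduction map: a fact `fh` is sent to the pair `(fh[X], fh[X'])` over the
binary schema `R(A,B)`. -/
def toPair (X X' : Finset Attr) (f : Attr → Val) :
    ((↥X → Val) × (↥X' → Val)) :=
  ((fun A => f A.1), (fun A => f A.1))

/-- Cost of `Eh ⊆ Dh` w.r.t. the matching constraint `{X→Y, X'→Y'}`. -/
noncomputable def costHat (X Y X' Y' : Finset Attr) (Dh : Finset (Attr → Val))
    (wh : (Attr → Val) → ℚ) (w1 w2 : ℚ) (Eh : Finset (Attr → Val)) : ℚ :=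
  (∑ f ∈ Dh \ Eh, wh f) +
    w1 * (numVio (fun f g => f ≠ g ∧ agreeOn X f g ∧ ¬ agreeOn Y f g) Eh : ℚ) +
    w2 * (numVio (fun f g => f ≠ g ∧ agreeOn X' f g ∧ ¬ agreeOn Y' f g) Eh : ℚ)

/-- Cost of a binary subset `E ⊆ D` w.r.t. `{A→B, B→A}`. -/
noncomputable def costBin (X X' : Finset Attr)
    (D : Finset ((↥X → Val) × (↥X' → Val)))
    (wp : ((↥X → Val) × (↥X' → Val)) → ℚ) (w1 w2 : ℚ)
    (E : Finset ((↥X → Val) × (↥X' → Val))) : ℚ :=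
  (∑ p ∈ D \ E, wp p) +
    w1 * (numVio (fun p q => p.1 = q.1 ∧ p.2 ≠ q.2) E : ℚ) +
    w2 * (numVio (fun p q => p.2 = q.2 ∧ p.1 ≠ q.1) E : ℚ)

lemma numVio_image {F G : Type*} [DecidableEq F] [DecidableEq G]
    (φ : F → G) (hφ : Function.Injective φ)
    (v : F → F → Prop) (v' : G → G → Prop)
    (h : ∀ f g, v f g ↔ v' (φ f) (φ g)) (E : Finset F) :
    numVio v E = numVio v' (E.image φ) := by
  unfold numVio
  apply Finset.card_bij (fun p _ => p.image φ)
  · intro p hp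
    simp only [Finset.mem_filter, Finset.mem_powersetCard] at hp ⊢
    obtain ⟨⟨hsub, hcard⟩, hv⟩ := hp
    refine ⟨⟨Finset.image_subset_image hsub,
      by rw [Finset.card_image_of_injective _ hφ]; exact hcard⟩, ?_⟩
    intro a ha b hb hab
    simp only [Finset.mem_image] at ha hb
    obtain ⟨f, hf, rfl⟩ := ha; obtain ⟨g, hg, rfl⟩ := hb
    exact (h f g).mp (hv f hf g hg (fun e => hab (congrArg φ e)))
  · intro p hp q hq hpq
    exact Finset.image_injective hφ hpq
  · intro q hq
    simp only [Finset.mem_filter, Finset.mem_powersetCard] at hq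
    obtain ⟨⟨hsub, hcard⟩, hv⟩ := hq
    obtain ⟨p, hpE, rfl⟩ := Finset.subset_image_iff.mp hsub
    refine ⟨p, ?_, rfl⟩
    simp only [Finset.mem_filter, Finset.mem_powersetCard]
    refine ⟨⟨hpE, by rwa [Finset.card_image_of_injective _ hφ] at hcard⟩, ?_⟩
    intro f hf g hg hfg
    exact (h f g).mpr (hv _ (Finset.mem_image_of_mem _ hf) _
      (Finset.mem_image_of_mem _ hg) (fun e => hfg (hφ e)))

lemma toPair_inj (X X' : Finset Attr) (h : X ∪ X' = Finset.univ) :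
    Function.Injective (toPair (Val := Val) X X') := by
  intro f g hfg
  obtain ⟨h1, h2⟩ := Prod.ext_iff.mp hfg
  funext A
  have : A ∈ X ∪ X' := h ▸ Finset.mem_univ A
  rcases Finset.mem_union.mp this with hA | hA
  · exact congrFun h1 ⟨A, hA⟩
  · exact congrFun h2 ⟨A, hA⟩

lemma toPair_fst_eq (X X' : Finset Attr) (f g : Attr → Val) :
    (toPair X X' f).1 = (toPair X X' g).1 ↔ agreeOn X f g := by
  constructor
  · intro h A hA; exact congrFun h ⟨A, hA⟩
  · intro h; funext A; exact h A.1 A.2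

lemma toPair_snd_eq (X X' : Finset Attr) (f g : Attr → Val) :
    (toPair X X' f).2 = (toPair X X' g).2 ↔ agreeOn X' f g := by
  constructor
  · intro h A hA; exact congrFun h ⟨A, hA⟩
  · intro h; funext A; exact h A.1 A.2

lemma agree_agree_eq {X Y : Finset Attr} (h : X ∪ Y = Finset.univ)
    {f g : Attr → Val} (h1 : agreeOn X f g) (h2 : agreeOn Y f g) : f = g := by
  funext A
  have : A ∈ X ∪ Y := h ▸ Finset.mem_univ A
  rcases Finset.mem_union.mp this with hA | hA
  · exact h1 A hA
  · exact h2 A hA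

lemma viol_iff1 (X Y X' : Finset Attr)
    (hXY : X ∪ Y = Finset.univ) (hXX' : X ∪ X' = Finset.univ)
    (f g : Attr → Val) :
    (f ≠ g ∧ agreeOn X f g ∧ ¬ agreeOn Y f g) ↔
      ((toPair X X' f).1 = (toPair X X' g).1 ∧ (toPair X X' f).2 ≠ (toPair X X' g).2) := by
  simp only [Ne, toPair_fst_eq, toPair_snd_eq]
  constructor
  · rintro ⟨hne, hX, _⟩
    exact ⟨hX, fun hX' => hne (agree_agree_eq hXX' hX hX')⟩
  · rintro ⟨hX, hX'⟩
    have hne : f ≠ g := fun e => hX' (e ▸ fun A _ => rfl)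
    exact ⟨hne, hX, fun hY => hne (agree_agree_eq hXY hX hY)⟩

lemma viol_iff2 (X X' Y' : Finset Attr)
    (hX'Y' : X' ∪ Y' = Finset.univ) (hXX' : X ∪ X' = Finset.univ)
    (f g : Attr → Val) :
    (f ≠ g ∧ agreeOn X' f g ∧ ¬ agreeOn Y' f g) ↔
      ((toPair X X' f).2 = (toPair X X' g).2 ∧ (toPair X X' f).1 ≠ (toPair X X' g).1) := by
  simp only [Ne, toPair_fst_eq, toPair_snd_eq]
  have hX'X : X' ∪ X = Finset.univ := by rwa [Finset.union_comm]
  constructor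
  · rintro ⟨hne, hX', _⟩
    exact ⟨hX', fun hX => hne (agree_agree_eq hX'X hX' hX)⟩
  · rintro ⟨hX', hX⟩
    have hne : f ≠ g := fun e => hX (e ▸ fun A _ => rfl)
    exact ⟨hne, hX', fun hY' => hne (agree_agree_eq hX'Y' hX' hY')⟩

/-- Correctness of the reduction from a matching constraint to the binary case:
the map `fh ↦ (fh[X], fh[X'])` is injective, preserves the numbers of violations,
preserves costs, and preserves optimality. -/
theorem matching_constraint_reduction (X Y X' Y' : Finset Attr)
    (hXY : X ∪ Y = Finset.univ) (hX'Y' : X' ∪ Y' = Finset.univ)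
    (hXX' : X ∪ X' = Finset.univ)
    (Dh : Finset (Attr → Val)) (wh : (Attr → Val) → ℚ) (w1 w2 : ℚ)
    (hw : ∀ f ∈ Dh, 0 ≤ wh f) (h1 : 0 ≤ w1) (h2 : 0 ≤ w2)
    (wp : ((↥X → Val) × (↥X' → Val)) → ℚ)
    (hwp : ∀ f : Attr → Val, wp (toPair X X' f) = wh f) :
    Function.Injective (toPair (Val := Val) X X') ∧
    (∀ Eh : Finset (Attr → Val),
      numVio (fun f g => f ≠ g ∧ agreeOn X f g ∧ ¬ agreeOn Y f g) Eh =
        numVio (fun p q => p.1 = q.1 ∧ p.2 ≠ q.2) (Eh.image (toPair X X')) ∧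
      numVio (fun f g => f ≠ g ∧ agreeOn X' f g ∧ ¬ agreeOn Y' f g) Eh =
        numVio (fun p q => p.2 = q.2 ∧ p.1 ≠ q.1) (Eh.image (toPair X X'))) ∧
    (∀ Eh ⊆ Dh,
      costHat X Y X' Y' Dh wh w1 w2 Eh =
        costBin X X' (Dh.image (toPair X X')) wp w1 w2 (Eh.image (toPair X X'))) ∧
    (∀ Eh ⊆ Dh,
      ((∀ Eh' ⊆ Dh, costHat X Y X' Y' Dh wh w1 w2 Eh ≤ costHat X Y X' Y' Dh wh w1 w2 Eh') ↔
        (∀ E' ⊆ Dh.image (toPair X X'),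
          costBin X X' (Dh.image (toPair X X')) wp w1 w2 (Eh.image (toPair X X')) ≤
            costBin X X' (Dh.image (toPair X X')) wp w1 w2 E'))) := by
  have hinj := toPair_inj (Val := Val) X X' hXX'
  have hnum : ∀ Eh : Finset (Attr → Val),
      numVio (fun f g => f ≠ g ∧ agreeOn X f g ∧ ¬ agreeOn Y f g) Eh =
        numVio (fun p q => p.1 = q.1 ∧ p.2 ≠ q.2) (Eh.image (toPair X X')) ∧
      numVio (fun f g => f ≠ g ∧ agreeOn X' f g ∧ ¬ agreeOn Y' f g) Eh =
        numVio (fun p q => p.2 = q.2 ∧ p.1 ≠ q.1) (Eh.image (toPair X X')) := by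
    intro Eh
    exact ⟨numVio_image _ hinj _ _ (viol_iff1 X Y X' hXY hXX') Eh,
      numVio_image _ hinj _ _ (viol_iff2 X X' Y' hX'Y' hXX') Eh⟩
  have hcost : ∀ Eh ⊆ Dh,
      costHat X Y X' Y' Dh wh w1 w2 Eh =
        costBin X X' (Dh.image (toPair X X')) wp w1 w2 (Eh.image (toPair X X')) := by
    intro Eh _
    unfold costHat costBin
    rw [← (hnum Eh).1, ← (hnum Eh).2]
    congr 2
    rw [← Finset.image_sdiff _ _ hinj, Finset.sum_image (fun a _ b _ h => hinj h)]
    exact Finset.sum_congr rfl (fun f _ => (hwp f).symm)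
  refine ⟨hinj, hnum, hcost, ?_⟩
  intro Eh hEh
  constructor
  · intro hopt E' hE'
    obtain ⟨Eh', hEh', rfl⟩ := Finset.subset_image_iff.mp hE'
    rw [← hcost Eh hEh, ← hcost Eh' hEh']
    exact hopt Eh' hEh'
  · intro hopt Eh' hEh'
    rw [hcost Eh hEh, hcost Eh' hEh']
    exact hopt _ (Finset.image_subset_image hEh')
end

section
/- Let Δ be a set of FDs over {A_1,…,A_k} and A an attribute that is an lhs or consensus attribute of every FD of Δ. Let w₀ be the total weight of the FDs of which A is a consensus attribute, and let Δ' = Δ − A (remove A from all FDs, then remove trivial FDs). Let D be a database with blocks D_1,…,D_m by A-value. Then for every subset E ⊆ D with E_i = E ∩ D_i: Σ_{φ∈Δ} w_φ·|vio(E,φ)| = w₀·Σ_{1≤i<j≤m} |E_i|·|E_j| + Σ_{i=1}^m Σ_{φ'∈Δ'} w_{φ'}·|vio(E_i, φ')|, where the weight of φ' ∈ Δ' is the sum of weights of FDs of Δ mapping to it. -/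
attribute [local instance] Classical.propDecidable

open Finset

/-- The pair of distinct facts `{f,g}` violates the FD `X → Y`. -/
def violatesFD {Attr Val : Type*} (φ : Finset Attr × Finset Attr)
    (f g : Attr → Val) : Prop :=
  f ≠ g ∧ agreeOn φ.1 f g ∧ ¬ agreeOn φ.2 f g

/-- Removing the attribute `A` from an FD. -/
def rmA {Attr : Type*} [DecidableEq Attr] (A : Attr)
    (φ : Finset Attr × Finset Attr) : Finset Attr × Finset Attr :=
  (φ.1.erase A, φ.2.erase A)


set_option linter.unusedSectionVars false

lemma two_mul_numVio {F : Type*} [DecidableEq F] (viol : F → F → Prop)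
    (hs : ∀ f g, viol f g → viol g f) (E : Finset F) :
    (E.offDiag.filter fun q => viol q.1 q.2).card = 2 * numVio viol E := by
  classical
  rw [numVio]
  have hmaps : ∀ q ∈ E.offDiag.filter fun q => viol q.1 q.2,
      ({q.1, q.2} : Finset F) ∈
        (E.powersetCard 2).filter (fun p => ∀ f ∈ p, ∀ g ∈ p, f ≠ g → viol f g) := by
    rintro ⟨f, g⟩ hq
    simp only [mem_filter, mem_offDiag] at hq
    obtain ⟨⟨hf, hg, hne⟩, hv⟩ := hq
    simp only [mem_filter, mem_powersetCard]
    refine ⟨⟨?_, ?_⟩, ?_⟩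
    · intro x hx
      simp only [mem_insert, mem_singleton] at hx
      rcases hx with rfl | rfl <;> assumption
    · rw [card_insert_of_notMem (by simpa using hne), card_singleton]
    · intro a ha b hb hab
      simp only [mem_insert, mem_singleton] at ha hb
      rcases ha with rfl | rfl <;> rcases hb with rfl | rfl
      · exact absurd rfl hab
      · exact hv
      · exact hs _ _ hv
      · exact absurd rfl hab
  rw [Finset.card_eq_sum_card_fiberwise hmaps]
  rw [Finset.sum_congr rfl (fun p hp => ?_), Finset.sum_const, smul_eq_mul, Nat.mul_comm]
  simp only [mem_filter, mem_powersetCard] at hp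
  obtain ⟨⟨hsub, hcard⟩, hall⟩ := hp
  obtain ⟨f, g, hfg, rfl⟩ := Finset.card_eq_two.mp hcard
  have : (E.offDiag.filter fun q => viol q.1 q.2).filter
      (fun q => ({q.1, q.2} : Finset F) = {f, g}) = {(f, g), (g, f)} := by
    ext ⟨a, b⟩
    simp only [mem_filter, mem_offDiag, mem_insert, mem_singleton, Prod.mk.injEq]
    constructor
    · rintro ⟨⟨⟨ha, hb, hab⟩, hv⟩, heq⟩
      have ha' : a ∈ ({f, g} : Finset F) := heq ▸ (by simp)
      have hb' : b ∈ ({f, g} : Finset F) := heq ▸ (by simp)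
      simp only [mem_insert, mem_singleton] at ha' hb'
      rcases ha' with rfl | rfl <;> rcases hb' with rfl | rfl
      · exact absurd rfl hab
      · exact Or.inl ⟨rfl, rfl⟩
      · exact Or.inr ⟨rfl, rfl⟩
      · exact absurd rfl hab
    · have hf : f ∈ E := hsub (by simp)
      have hg : g ∈ E := hsub (by simp)
      have hvfg : viol f g := hall f (by simp) g (by simp) hfg
      rintro (⟨rfl, rfl⟩ | ⟨rfl, rfl⟩)
      · exact ⟨⟨⟨hf, hg, hfg⟩, hvfg⟩, rfl⟩
      · exact ⟨⟨⟨hg, hf, Ne.symm hfg⟩, hs _ _ hvfg⟩, by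
          rw [Finset.pair_comm]⟩
    
  rw [this]
  rw [Finset.card_insert_of_notMem (by simp [Prod.ext_iff, hfg, Ne.symm hfg]), card_singleton]

section helpers
variable {Attr Val : Type*} [DecidableEq Attr] [DecidableEq Val]

lemma violatesFD_symm {φ : Finset Attr × Finset Attr} {f g : Attr → Val}
    (h : violatesFD φ f g) : violatesFD φ g f := by
  obtain ⟨hne, h1, h2⟩ := h
  exact ⟨hne.symm, fun a ha => (h1 a ha).symm, fun hc => h2 fun a ha => (hc a ha).symm⟩

lemma agreeOn_erase_iff {X : Finset Attr} {A : Attr} {f g : Attr → Val}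
    (h : f A = g A) : agreeOn (X.erase A) f g ↔ agreeOn X f g := by
  constructor
  · intro ha a haX
    by_cases hA : a = A
    · subst hA; exact h
    · exact ha a (Finset.mem_erase.mpr ⟨hA, haX⟩)
  · intro ha a haX
    exact ha a (Finset.mem_of_mem_erase haX)

lemma violatesFD_rmA_iff {φ : Finset Attr × Finset Attr} {A : Attr} {f g : Attr → Val}
    (h : f A = g A) : violatesFD (rmA A φ) f g ↔ violatesFD φ f g := by
  unfold violatesFD rmA
  simp only [agreeOn_erase_iff h]

lemma not_violates_of_subset {φ : Finset Attr × Finset Attr} {f g : Attr → Val}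
    (h : φ.2 ⊆ φ.1) : ¬ violatesFD φ f g := by
  rintro ⟨_, h1, h2⟩
  exact h2 fun a ha => h1 a (h ha)

lemma key_count [Fintype Attr] (A : Attr) (φ : Finset Attr × Finset Attr)
    (hφ : A ∈ φ.1 ∨ (φ.1 = ∅ ∧ A ∈ φ.2)) (E : Finset (Attr → Val)) :
    (E.offDiag.filter fun q => violatesFD φ q.1 q.2).card =
      (if φ.1 = ∅ ∧ A ∈ φ.2 then
        ∑ p ∈ (E.image (fun f => f A)).offDiag,
          (E.filter (fun f => f A = p.1)).card * (E.filter (fun f => f A = p.2)).card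
       else 0)
      + ∑ v ∈ E.image (fun f => f A),
          ((E.filter (fun f => f A = v)).offDiag.filter
            fun q => violatesFD (rmA A φ) q.1 q.2).card := by
  classical
  rw [← Finset.card_filter_add_card_filter_not
    (s := E.offDiag.filter fun q => violatesFD φ q.1 q.2) (p := fun q => q.1 A = q.2 A)]
  rw [Nat.add_comm]
  congr 1
  · -- cross part
    rw [Finset.filter_filter]
    rcases hφ with hA1 | ⟨h1, h2⟩
    · have hempty : (E.offDiag.filter fun q => violatesFD φ q.1 q.2 ∧ ¬ q.1 A = q.2 A) = ∅ := by
        rw [Finset.filter_eq_empty_iff]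
        rintro q _ ⟨⟨_, hag, _⟩, hne⟩
        exact hne (hag A hA1)
      rw [hempty, Finset.card_empty, if_neg]
      rintro ⟨he, _⟩
      rw [he] at hA1
      exact absurd hA1 (Finset.notMem_empty A)
    · rw [if_pos ⟨h1, h2⟩]
      have hset : (E.offDiag.filter fun q => violatesFD φ q.1 q.2 ∧ ¬ q.1 A = q.2 A)
          = E.offDiag.filter fun q => ¬ q.1 A = q.2 A := by
        ext q
        simp only [mem_filter, and_congr_right_iff]
        intro _
        constructor
        · exact And.right
        · intro hne
          refine ⟨⟨?_, ?_, ?_⟩, hne⟩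
          · intro hc; exact hne (by rw [hc])
          · rw [h1]; intro a ha; exact absurd ha (Finset.notMem_empty a)
          · intro hag; exact hne (hag A h2)
      rw [hset]
      have hmaps : ∀ q ∈ E.offDiag.filter fun q : (Attr → Val) × (Attr → Val) => ¬ q.1 A = q.2 A,
          (q.1 A, q.2 A) ∈ (E.image (fun f => f A)).offDiag := by
        rintro ⟨f, g⟩ hq
        simp only [mem_filter, mem_offDiag] at hq ⊢
        exact ⟨Finset.mem_image_of_mem _ hq.1.1, Finset.mem_image_of_mem _ hq.1.2.1, hq.2⟩
      rw [Finset.card_eq_sum_card_fiberwise hmaps]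
      refine Finset.sum_congr rfl fun p hp => ?_
      obtain ⟨v1, v2⟩ := p
      simp only [mem_offDiag] at hp
      have hst : ((E.offDiag.filter fun q : (Attr → Val) × (Attr → Val) => ¬ q.1 A = q.2 A).filter
          fun q => (q.1 A, q.2 A) = (v1, v2))
          = (E.filter fun f => f A = v1) ×ˢ (E.filter fun f => f A = v2) := by
        ext ⟨f, g⟩
        simp only [mem_filter, mem_offDiag, mem_product, Prod.mk.injEq]
        constructor
        · rintro ⟨⟨⟨hf, hg, _⟩, _⟩, h1', h2'⟩
          exact ⟨⟨hf, h1'⟩, hg, h2'⟩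
        · rintro ⟨⟨hf, h1'⟩, hg, h2'⟩
          have hAne : f A ≠ g A := by rw [h1', h2']; exact hp.2.2
          exact ⟨⟨⟨hf, hg, fun hc => hAne (by rw [hc])⟩, hAne⟩, h1', h2'⟩
      rw [hst, Finset.card_product]
  · -- same part
    rw [Finset.filter_filter]
    have hmaps : ∀ q ∈ E.offDiag.filter
        fun q : (Attr → Val) × (Attr → Val) => violatesFD φ q.1 q.2 ∧ q.1 A = q.2 A,
        q.1 A ∈ E.image (fun f => f A) := by
      rintro ⟨f, g⟩ hq
      simp only [mem_filter, mem_offDiag] at hq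
      exact Finset.mem_image_of_mem _ hq.1.1
    rw [Finset.card_eq_sum_card_fiberwise hmaps]
    refine Finset.sum_congr rfl fun v hv => ?_
    congr 1
    ext ⟨f, g⟩
    simp only [mem_filter, mem_offDiag]
    constructor
    · rintro ⟨⟨⟨hf, hg, hne⟩, hviol, heq⟩, hfA⟩
      refine ⟨⟨⟨hf, hfA⟩, ⟨hg, by rw [← heq, hfA]⟩, hne⟩, ?_⟩
      exact (violatesFD_rmA_iff heq).mpr hviol
    · rintro ⟨⟨⟨hf, hfA⟩, ⟨hg, hgA⟩, hne⟩, hviol⟩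
      have heq : f A = g A := by rw [hfA, hgA]
      exact ⟨⟨⟨hf, hg, hne⟩, (violatesFD_rmA_iff heq).mp hviol, heq⟩, hfA⟩

end helpers

/-- Decomposition of the violation penalty along the blocks of an attribute `A`
that is an lhs or consensus attribute of every FD of `Δ`:
`Σ_{φ∈Δ} w_φ·|vio(E,φ)| = w₀·Σ_{i<j}|E_i||E_j| + Σ_i Σ_{φ'∈Δ−A} w_{φ'}·|vio(E_i,φ')|`,
where `w₀` is the total weight of the consensus FDs, blocks are by `A`-value, and
the weight of `φ' ∈ Δ − A` (trivial FDs removed) is the total weight of the FDs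
of `Δ` mapping to it. -/
theorem lc_simplify_decomposition {Attr Val : Type*}
    [Fintype Attr] [DecidableEq Attr] [DecidableEq Val]
    (Δ : Finset (Finset Attr × Finset Attr))
    (wΔ : Finset Attr × Finset Attr → ℚ)
    (hwΔ : ∀ φ ∈ Δ, 0 ≤ wΔ φ)
    (A : Attr)
    (hA : ∀ φ ∈ Δ, A ∈ φ.1 ∨ (φ.1 = ∅ ∧ A ∈ φ.2))
    (E : Finset (Attr → Val)) :
    (∑ φ ∈ Δ, wΔ φ * (numVio (violatesFD φ) E : ℚ)) =
      (∑ φ ∈ Δ.filter (fun φ => φ.1 = ∅ ∧ A ∈ φ.2), wΔ φ) *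
        ((1 / 2 : ℚ) * ∑ p ∈ (E.image (fun f => f A)).offDiag,
          ((E.filter (fun f => f A = p.1)).card : ℚ) *
            ((E.filter (fun f => f A = p.2)).card : ℚ)) +
      ∑ v ∈ E.image (fun f => f A),
        ∑ φ' ∈ (Δ.image (rmA A)).filter (fun ψ => ¬ ψ.2 ⊆ ψ.1),
          (∑ φ ∈ Δ.filter (fun φ => rmA A φ = φ'), wΔ φ) *
            (numVio (violatesFD φ') (E.filter (fun f => f A = v)) : ℚ) := by
  classical
  have hN : ∀ (φ : Finset Attr × Finset Attr) (E' : Finset (Attr → Val)),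
      ((E'.offDiag.filter fun q => violatesFD φ q.1 q.2).card : ℚ)
        = 2 * (numVio (violatesFD φ) E' : ℚ) := by
    intro φ E'
    exact_mod_cast two_mul_numVio (violatesFD φ) (fun _ _ => violatesFD_symm) E'
  have hnv : ∀ (φ : Finset Attr × Finset Attr) (E' : Finset (Attr → Val)),
      (numVio (violatesFD φ) E' : ℚ)
        = ((E'.offDiag.filter fun q => violatesFD φ q.1 q.2).card : ℚ) / 2 := by
    intro φ E'
    have := hN φ E'
    linarith
  have hkeyQ : ∀ φ ∈ Δ, ((E.offDiag.filter fun q => violatesFD φ q.1 q.2).card : ℚ) =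
      (if φ.1 = ∅ ∧ A ∈ φ.2 then
        ∑ p ∈ (E.image (fun f => f A)).offDiag,
          ((E.filter (fun f => f A = p.1)).card : ℚ) *
            ((E.filter (fun f => f A = p.2)).card : ℚ)
       else 0)
      + ∑ v ∈ E.image (fun f => f A),
          (((E.filter (fun f => f A = v)).offDiag.filter
            fun q => violatesFD (rmA A φ) q.1 q.2).card : ℚ) := by
    intro φ hφ
    rw [key_count A φ (hA φ hφ) E]
    push_cast
    rfl
  have hregroup : ∀ v : Val,
      (∑ φ' ∈ (Δ.image (rmA A)).filter (fun ψ => ¬ ψ.2 ⊆ ψ.1),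
        (∑ φ ∈ Δ.filter (fun φ => rmA A φ = φ'), wΔ φ) *
          ((((E.filter (fun f => f A = v)).offDiag.filter
            fun q => violatesFD φ' q.1 q.2).card : ℚ) / 2))
      = ∑ φ ∈ Δ, wΔ φ *
          ((((E.filter (fun f => f A = v)).offDiag.filter
            fun q => violatesFD (rmA A φ) q.1 q.2).card : ℚ) / 2) := by
    intro v
    have step1 : ∀ φ' ∈ (Δ.image (rmA A)).filter (fun ψ => ¬ ψ.2 ⊆ ψ.1),
        (∑ φ ∈ Δ.filter (fun φ => rmA A φ = φ'), wΔ φ) *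
          ((((E.filter (fun f => f A = v)).offDiag.filter
            fun q => violatesFD φ' q.1 q.2).card : ℚ) / 2)
        = ∑ φ ∈ Δ.filter (fun φ => rmA A φ = φ'), wΔ φ *
            ((((E.filter (fun f => f A = v)).offDiag.filter
              fun q => violatesFD (rmA A φ) q.1 q.2).card : ℚ) / 2) := by
      intro φ' hφ'
      rw [Finset.sum_mul]
      refine Finset.sum_congr rfl fun φ hφ => ?_
      rw [(Finset.mem_filter.mp hφ).2]
    rw [Finset.sum_congr rfl step1]
    have step2 : ∑ φ' ∈ (Δ.image (rmA A)).filter (fun ψ => ¬ ¬ ψ.2 ⊆ ψ.1),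
        (∑ φ ∈ Δ.filter (fun φ => rmA A φ = φ'), wΔ φ *
          ((((E.filter (fun f => f A = v)).offDiag.filter
            fun q => violatesFD (rmA A φ) q.1 q.2).card : ℚ) / 2)) = 0 := by
      refine Finset.sum_eq_zero fun φ' hφ' => ?_
      refine Finset.sum_eq_zero fun φ hφ => ?_
      have htr : φ'.2 ⊆ φ'.1 := not_not.mp (Finset.mem_filter.mp hφ').2
      have hrm : rmA A φ = φ' := (Finset.mem_filter.mp hφ).2
      have hempty : ((E.filter (fun f => f A = v)).offDiag.filter
          fun q => violatesFD (rmA A φ) q.1 q.2) = ∅ := by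
        rw [Finset.filter_eq_empty_iff]
        intro q _
        rw [hrm]
        exact not_violates_of_subset htr
      rw [hempty]
      simp
    have step3 := Finset.sum_filter_add_sum_filter_not (Δ.image (rmA A))
      (fun ψ => ¬ ψ.2 ⊆ ψ.1)
      (fun φ' => ∑ φ ∈ Δ.filter (fun φ => rmA A φ = φ'), wΔ φ *
        ((((E.filter (fun f => f A = v)).offDiag.filter
          fun q => violatesFD (rmA A φ) q.1 q.2).card : ℚ) / 2))
    rw [step2, add_zero] at step3
    rw [step3]
    exact Finset.sum_fiberwise_of_maps_to (fun φ hφ => Finset.mem_image_of_mem _ hφ) _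
  simp only [hnv]
  have t1 : (∑ φ ∈ Δ, wΔ φ *
      (((E.offDiag.filter fun q => violatesFD φ q.1 q.2).card : ℚ) / 2)) =
      ∑ φ ∈ Δ, ((if φ.1 = ∅ ∧ A ∈ φ.2 then
        wΔ φ * ((1/2 : ℚ) * ∑ p ∈ (E.image (fun f => f A)).offDiag,
          ((E.filter (fun f => f A = p.1)).card : ℚ) *
            ((E.filter (fun f => f A = p.2)).card : ℚ))
       else 0)
      + ∑ v ∈ E.image (fun f => f A),
          wΔ φ * ((((E.filter (fun f => f A = v)).offDiag.filter
            fun q => violatesFD (rmA A φ) q.1 q.2).card : ℚ) / 2)) := by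
    refine Finset.sum_congr rfl fun φ hφ => ?_
    rw [hkeyQ φ hφ]
    rw [add_div, mul_add, Finset.sum_div, Finset.mul_sum]
    congr 1
    by_cases hc : φ.1 = ∅ ∧ A ∈ φ.2
    · rw [if_pos hc, if_pos hc]; ring
    · rw [if_neg hc, if_neg hc]; ring
  rw [t1, Finset.sum_add_distrib, ← Finset.sum_filter]
  congr 1
  · rw [Finset.sum_mul]
  · rw [Finset.sum_comm]
    exact Finset.sum_congr rfl fun v hv => (hregroup v).symm
end

section
/- Let Δ = {A→B, B→A, B→C} over R(A,B,C). If soft repairing for Δ is solvable in polynomial time, then computing a cardinality repair for {A→B, B→C} is solvable in polynomial time. More precisely: given a database D₀ over R(A,B,C) with unit fact weights, setting w_{A→B} = w_{B→C} = M for M greater than Σ_{f∈D₀} w_f and w_{B→A} = 0, any optimal subset E of D₀ with respect to the soft semantics satisfies E ⊨ {A→B, B→C} and E is a maximum-cardinality consistent subset for {A→B, B→C}. -/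
attribute [local instance] Classical.propDecidable

open Finset

variable {α β γ : Type*} [DecidableEq α] [DecidableEq β] [DecidableEq γ]

/-- A pair violates `A → B` over `R(A,B,C)`. -/
def violAB (f g : α × β × γ) : Prop := f.1 = g.1 ∧ f.2.1 ≠ g.2.1

/-- A pair violates `B → C` over `R(A,B,C)`. -/
def violBC (f g : α × β × γ) : Prop := f.2.1 = g.2.1 ∧ f.2.2 ≠ g.2.2

/-- A pair violates `B → A` over `R(A,B,C)`. -/
def violBA (f g : α × β × γ) : Prop := f.2.1 = g.2.1 ∧ f.1 ≠ g.1

/-- Soft cost for `Δ = {A→B, B→A, B→C}` with unit fact weights,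
`w_{A→B} = w_{B→C} = M` and `w_{B→A} = 0`. -/
noncomputable def costM (D₀ : Finset (α × β × γ)) (M : ℚ)
    (E : Finset (α × β × γ)) : ℚ :=
  ((D₀ \ E).card : ℚ) + M * (numVio violAB E : ℚ) + M * (numVio violBC E : ℚ) +
    0 * (numVio violBA E : ℚ)

lemma numVio_eq_zero {F : Type*} [DecidableEq F] {viol : F → F → Prop}
    {E : Finset F} (h : ∀ f ∈ E, ∀ g ∈ E, f ≠ g → ¬ viol f g) :
    numVio viol E = 0 := by
  simp only [numVio, Finset.card_eq_zero, Finset.filter_eq_empty_iff]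
  intro p hp
  rw [Finset.mem_powersetCard] at hp
  obtain ⟨hsub, hcard⟩ := hp
  obtain ⟨f, g, hfg, rfl⟩ := Finset.card_eq_two.mp hcard
  intro hv
  exact h f (hsub (by simp)) g (hsub (by simp)) hfg
    (hv f (by simp) g (by simp) hfg)

lemma one_le_numVio {F : Type*} [DecidableEq F] {viol : F → F → Prop}
    {E : Finset F} {f g : F} (hf : f ∈ E) (hg : g ∈ E) (hfg : f ≠ g)
    (h1 : viol f g) (h2 : viol g f) : 1 ≤ numVio viol E := by
  rw [Nat.one_le_iff_ne_zero, ← Nat.pos_iff_ne_zero, numVio, Finset.card_pos]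
  refine ⟨{f, g}, ?_⟩
  simp only [Finset.mem_filter, Finset.mem_powersetCard]
  refine ⟨⟨Finset.insert_subset hf (Finset.singleton_subset_iff.mpr hg),
    Finset.card_pair hfg⟩, ?_⟩
  intro a ha b hb hab
  simp only [Finset.mem_insert, Finset.mem_singleton] at ha hb
  rcases ha with rfl | rfl <;> rcases hb with rfl | rfl <;>
    first | exact h1 | exact h2 | exact absurd rfl hab

/-- Hardness transfer: with `Δ = {A→B, B→A, B→C}`, unit fact weights,
`w_{A→B} = w_{B→C} = M > Σ_{f∈D₀} w_f = |D₀|` and `w_{B→A} = 0`, every optimal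
subset `E` of `D₀` satisfies `{A→B, B→C}` and is a maximum-cardinality
consistent subset for `{A→B, B→C}`, i.e. a cardinality repair. -/
theorem soft_repair_simulates_cardinality_repair
    (D₀ : Finset (α × β × γ)) (M : ℚ) (hM : (D₀.card : ℚ) < M)
    (E : Finset (α × β × γ)) (hE : E ⊆ D₀)
    (hopt : ∀ E' ⊆ D₀, costM D₀ M E ≤ costM D₀ M E') :
    (∀ f ∈ E, ∀ g ∈ E, ¬ violAB f g) ∧
    (∀ f ∈ E, ∀ g ∈ E, ¬ violBC f g) ∧
    (∀ E' ⊆ D₀, (∀ f ∈ E', ∀ g ∈ E', ¬ violAB f g ∧ ¬ violBC f g) →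
      E'.card ≤ E.card) := by
  have hM0 : (0:ℚ) < M := lt_of_le_of_lt (by positivity) hM
  -- cost of the empty set is |D₀|
  have hempty : costM D₀ M (∅ : Finset (α × β × γ)) = (D₀.card : ℚ) := by
    have h1 : numVio violAB (∅ : Finset (α × β × γ)) = 0 :=
      numVio_eq_zero (by simp)
    have h2 : numVio violBC (∅ : Finset (α × β × γ)) = 0 :=
      numVio_eq_zero (by simp)
    have h3 : numVio violBA (∅ : Finset (α × β × γ)) = 0 :=
      numVio_eq_zero (by simp)
    simp [costM, h1, h2, h3]
  have hle : costM D₀ M E ≤ (D₀.card : ℚ) := by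
    rw [← hempty]; exact hopt ∅ (Finset.empty_subset _)
  have hAB0 : numVio violAB E = 0 := by
    by_contra h
    have h1 : (1:ℚ) ≤ (numVio violAB E : ℚ) := by exact_mod_cast Nat.one_le_iff_ne_zero.mpr h
    have : M ≤ costM D₀ M E := by
      have := mul_le_mul_of_nonneg_left h1 hM0.le
      unfold costM
      nlinarith [(Nat.cast_nonneg ((D₀ \ E).card) : (0:ℚ) ≤ _),
        (Nat.cast_nonneg (numVio violBC E) : (0:ℚ) ≤ _), mul_nonneg hM0.le (Nat.cast_nonneg (numVio violBC E) : (0:ℚ) ≤ _)]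
    linarith
  have hBC0 : numVio violBC E = 0 := by
    by_contra h
    have h1 : (1:ℚ) ≤ (numVio violBC E : ℚ) := by exact_mod_cast Nat.one_le_iff_ne_zero.mpr h
    have : M ≤ costM D₀ M E := by
      unfold costM
      nlinarith [(Nat.cast_nonneg ((D₀ \ E).card) : (0:ℚ) ≤ _),
        mul_nonneg hM0.le (Nat.cast_nonneg (numVio violAB E) : (0:ℚ) ≤ _)]
    linarith
  have noAB : ∀ f ∈ E, ∀ g ∈ E, ¬ violAB f g := by
    intro f hf g hg hv
    have hfg : f ≠ g := by intro h; subst h; exact hv.2 rfl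
    have : 1 ≤ numVio violAB E :=
      one_le_numVio hf hg hfg hv ⟨hv.1.symm, fun h => hv.2 h.symm⟩
    omega
  have noBC : ∀ f ∈ E, ∀ g ∈ E, ¬ violBC f g := by
    intro f hf g hg hv
    have hfg : f ≠ g := by intro h; subst h; exact hv.2 rfl
    have : 1 ≤ numVio violBC E :=
      one_le_numVio hf hg hfg hv ⟨hv.1.symm, fun h => hv.2 h.symm⟩
    omega
  refine ⟨noAB, noBC, ?_⟩
  intro E' hE' hcons
  have hAB' : numVio violAB E' = 0 :=
    numVio_eq_zero (fun f hf g hg _ => (hcons f hf g hg).1)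
  have hBC' : numVio violBC E' = 0 :=
    numVio_eq_zero (fun f hf g hg _ => (hcons f hf g hg).2)
  have hcost : costM D₀ M E ≤ costM D₀ M E' := hopt E' hE'
  have hD : ((D₀ \ E).card : ℚ) ≤ ((D₀ \ E').card : ℚ) := by
    unfold costM at hcost
    rw [hAB0, hBC0, hAB', hBC'] at hcost
    simpa using hcost
  have hcardE : (D₀ \ E).card = D₀.card - E.card := Finset.card_sdiff_of_subset hE
  have hcardE' : (D₀ \ E').card = D₀.card - E'.card := Finset.card_sdiff_of_subset hE'
  have hDn : (D₀ \ E).card ≤ (D₀ \ E').card := by exact_mod_cast hD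
  have h1 := Finset.card_le_card hE
  have h2 := Finset.card_le_card hE'
  omega
end
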